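/- First-order coefficient formula: in the adiabatic expansion with ergodic generator, b₁(s) = S(s) Ṗ(s) σ(s) = −S(s)² L̇(s) σ(s), and hence ‖b₁(s)‖₁ ≤ ‖S(s)‖²_{1,1} ‖L̇(s)‖_{1,1}. -/

import Mathlib

open scoped ComplexOrder
open scoped MatrixOrder

attribute [local instance] Matrix.frobeniusNormedAddCommGroup Matrix.frobeniusNormedSpace

/-- The trace norm (sum of singular values, i.e. of the square roots of the eigenvalues
of `Aᴴ * A`) of a complex square matrix. -/
noncomputable def traceNorm {m : Type*} [Fintype m] [DecidableEq m]
    (A : Matrix m m ℂ) : ℝ :=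
  ∑ i, Real.sqrt ((Matrix.isHermitian_mul_conjTranspose_self A.conjTranspose).eigenvalues i)


namespace Aux

variable {m : Type*} [Fintype m] [DecidableEq m]

lemma eig_congr {M N : Matrix m m ℂ} (h : M = N) (h1 : M.IsHermitian) (h2 : N.IsHermitian) :
    h1.eigenvalues = h2.eigenvalues := by subst h; rfl

lemma trace_eq_sum_eig {N : Matrix m m ℂ} (hN : N.IsHermitian) :
    N.trace = ∑ i, (hN.eigenvalues i : ℂ) := by
  conv_lhs => rw [hN.spectral_theorem]
  rw [Unitary.conjStarAlgAut_apply, Matrix.trace_mul_cycle,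
    show (star hN.eigenvectorUnitary.1 : Matrix m m ℂ) * hN.eigenvectorUnitary.1 = 1 from
      Matrix.UnitaryGroup.star_mul_self _, one_mul, Matrix.trace_diagonal]
  rfl

lemma trace_sqrt {N : Matrix m m ℂ} (hN : N.PosSemidef) :
    (CFC.sqrt N).trace = ∑ i, ((Real.sqrt (hN.1.eigenvalues i)) : ℂ) := by
  rw [CFC.sqrt_eq_cfc, cfc_nnreal_eq_real _ N hN.nonneg, hN.1.cfc_eq, Matrix.IsHermitian.cfc,
    Unitary.conjStarAlgAut_apply, Matrix.trace_mul_cycle,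
    show (star hN.1.eigenvectorUnitary.1 : Matrix m m ℂ) * hN.1.eigenvectorUnitary.1 = 1 from
      Matrix.UnitaryGroup.star_mul_self _, one_mul, Matrix.trace_diagonal]
  simp [max_eq_left (hN.eigenvalues_nonneg _)]

lemma traceNorm_eq_sum (A : Matrix m m ℂ) :
    traceNorm A =
      ∑ i, Real.sqrt ((Matrix.posSemidef_conjTranspose_mul_self A).1.eigenvalues i) := by
  unfold traceNorm
  rw [eig_congr (by rw [Matrix.conjTranspose_conjTranspose])
    (Matrix.isHermitian_mul_conjTranspose_self A.conjTranspose)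
    (Matrix.posSemidef_conjTranspose_mul_self A).1]

lemma traceNorm_nonneg (A : Matrix m m ℂ) : 0 ≤ traceNorm A := by
  rw [traceNorm_eq_sum]
  exact Finset.sum_nonneg fun i _ => Real.sqrt_nonneg _

lemma traceNorm_eq_re_trace_sqrt (A : Matrix m m ℂ) :
    traceNorm A = ((CFC.sqrt (A.conjTranspose * A)).trace).re := by
  rw [traceNorm_eq_sum, trace_sqrt (Matrix.posSemidef_conjTranspose_mul_self A), Complex.re_sum]
  simp

end Aux

namespace Aux2
open Aux Matrix
variable {m : Type*} [Fintype m] [DecidableEq m]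

lemma psd_smul {N : Matrix m m ℂ} (hN : N.PosSemidef) {r : ℝ} (hr : 0 ≤ r) :
    (((r : ℂ)) • N).PosSemidef := by
  exact hN.smul (Complex.zero_le_real.mpr hr)

lemma traceNorm_smul (c : ℂ) (A : Matrix m m ℂ) :
    traceNorm (c • A) = ‖c‖ * traceNorm A := by
  have hN := Matrix.posSemidef_conjTranspose_mul_self A
  have hmat : (c • A)ᴴ * (c • A) = (((‖c‖ ^ 2 : ℝ) : ℂ)) • (Aᴴ * A) := by
    rw [conjTranspose_smul, smul_mul_smul_comm]
    congr 1
    rw [Complex.star_def, mul_comm, Complex.mul_conj, Complex.normSq_eq_norm_sq,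
      Complex.ofReal_pow]
  have hBpsd : (((‖c‖ : ℝ) : ℂ) • CFC.sqrt (Aᴴ * A)).PosSemidef :=
    psd_smul (CFC.sqrt_nonneg _).posSemidef (norm_nonneg c)
  have hB2 : (((‖c‖ : ℝ) : ℂ) • CFC.sqrt (Aᴴ * A)) ^ 2 = (c • A)ᴴ * (c • A) := by
    rw [hmat, pow_two, smul_mul_smul_comm, CFC.sqrt_mul_sqrt_self _ hN.nonneg]
    norm_cast
    rw [pow_two]
  have hkey : ((((‖c‖ : ℝ) : ℂ) • CFC.sqrt (Aᴴ * A))) = CFC.sqrt ((c • A)ᴴ * (c • A)) := by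
    rw [← hB2, CFC.sqrt_sq _ hBpsd.nonneg]
  rw [traceNorm_eq_re_trace_sqrt, ← hkey, trace_smul, traceNorm_eq_re_trace_sqrt A]
  simp [Complex.smul_re]

lemma traceNorm_zero : traceNorm (0 : Matrix m m ℂ) = 0 := by
  have : (0 : Matrix m m ℂ) = (0 : ℂ) • (0 : Matrix m m ℂ) := by simp
  rw [this, traceNorm_smul]; simp

lemma traceNorm_neg (A : Matrix m m ℂ) : traceNorm (-A) = traceNorm A := by
  have : (-A) = (-1 : ℂ) • A := by simp
  rw [this, traceNorm_smul]; simp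

lemma traceNorm_of_psd {σ : Matrix m m ℂ} (hpsd : σ.PosSemidef) :
    traceNorm σ = (σ.trace).re := by
  have hsq : σ ^ 2 = σᴴ * σ := by rw [pow_two, hpsd.1.eq]
  have hkey : σ = CFC.sqrt (σᴴ * σ) := by rw [← hsq, CFC.sqrt_sq _ hpsd.nonneg]
  rw [traceNorm_eq_re_trace_sqrt, ← hkey]

end Aux2


/-- The superoperator norm induced by the trace norm (the `1→1` norm): the supremum of
`‖T X‖₁` over `‖X‖₁ ≤ 1`. -/
noncomputable def indNorm {n : ℕ}
    (T : Matrix (Fin n) (Fin n) ℂ →L[ℂ] Matrix (Fin n) (Fin n) ℂ) : ℝ :=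
  sSup {c : ℝ | ∃ X, traceNorm X ≤ 1 ∧ c = traceNorm (T X)}


instance instContinuousSMulRealMatrixCLM {n : ℕ} :
    ContinuousSMul ℝ (Matrix (Fin n) (Fin n) ℂ →L[ℂ] Matrix (Fin n) (Fin n) ℂ) :=
  ⟨by
    have h : (fun p : ℝ × (Matrix (Fin n) (Fin n) ℂ →L[ℂ] Matrix (Fin n) (Fin n) ℂ) => p.1 • p.2)
        = fun p => (algebraMap ℝ ℂ p.1) • p.2 := by
      funext p; exact (algebraMap_smul ℂ p.1 p.2).symm
    rw [h]
    exact ((continuous_algebraMap ℝ ℂ).comp continuous_fst).smul continuous_snd⟩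

namespace Aux3
open Aux Aux2 Matrix
variable {m : Type*} [Fintype m] [DecidableEq m]

lemma frob_sq (A : Matrix m m ℂ) : ‖A‖ ^ 2 = ∑ i, ∑ j, ‖A i j‖ ^ 2 := by
  rw [Matrix.frobenius_norm_def, ← Real.rpow_natCast _ 2,
    ← Real.rpow_mul (by positivity)]
  norm_num

lemma sum_eig_eq (A : Matrix m m ℂ) :
    ∑ i, (Matrix.posSemidef_conjTranspose_mul_self A).1.eigenvalues i = ‖A‖ ^ 2 := by
  have h1 : ((Aᴴ * A).trace).re =
      ∑ i, (Matrix.posSemidef_conjTranspose_mul_self A).1.eigenvalues i := by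
    rw [trace_eq_sum_eig (Matrix.posSemidef_conjTranspose_mul_self A).1, Complex.re_sum]
    simp
  rw [← h1, frob_sq, Matrix.trace, Complex.re_sum]
  rw [Finset.sum_comm]
  congr 1; funext i
  rw [Matrix.diag, Matrix.mul_apply, Complex.re_sum]
  congr 1; funext j
  rw [Matrix.conjTranspose_apply]
  have : (star (A j i) * A j i) = ((Complex.normSq (A j i) : ℝ) : ℂ) := by
    rw [Complex.star_def, mul_comm, Complex.mul_conj]
  rw [this, Complex.ofReal_re, Complex.normSq_eq_norm_sq]

lemma norm_eq_sqrt (A : Matrix m m ℂ) :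
    ‖A‖ = Real.sqrt (∑ i, (Matrix.posSemidef_conjTranspose_mul_self A).1.eigenvalues i) := by
  rw [sum_eig_eq, Real.sqrt_sq (norm_nonneg A)]

lemma norm_le_traceNorm (A : Matrix m m ℂ) : ‖A‖ ≤ traceNorm A := by
  rw [norm_eq_sqrt, traceNorm_eq_sum]
  set f := (Matrix.posSemidef_conjTranspose_mul_self A).1.eigenvalues
  have h : ∑ i, f i ≤ (∑ i, Real.sqrt (f i)) ^ 2 := by
    calc ∑ i, f i = ∑ i, (Real.sqrt (f i)) ^ 2 := by
          refine Finset.sum_congr rfl fun i _ => ?_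
          rw [Real.sq_sqrt
            ((Matrix.posSemidef_conjTranspose_mul_self A).eigenvalues_nonneg i)]
      _ ≤ (∑ i, Real.sqrt (f i)) ^ 2 :=
          Finset.sum_sq_le_sq_sum_of_nonneg fun i _ => Real.sqrt_nonneg _
  calc Real.sqrt (∑ i, f i) ≤ Real.sqrt ((∑ i, Real.sqrt (f i)) ^ 2) := Real.sqrt_le_sqrt h
    _ = ∑ i, Real.sqrt (f i) :=
        Real.sqrt_sq (Finset.sum_nonneg fun i _ => Real.sqrt_nonneg _)

lemma traceNorm_le_card_norm (A : Matrix m m ℂ) :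
    traceNorm A ≤ Real.sqrt (Fintype.card m) * ‖A‖ := by
  rw [traceNorm_eq_sum, norm_eq_sqrt]
  set f := (Matrix.posSemidef_conjTranspose_mul_self A).1.eigenvalues
  have h2 : ∑ i, (Real.sqrt (f i)) ^ 2 = ∑ i, f i := by
    refine Finset.sum_congr rfl fun i _ => ?_
    rw [Real.sq_sqrt ((Matrix.posSemidef_conjTranspose_mul_self A).eigenvalues_nonneg i)]
  have h := sq_sum_le_card_mul_sum_sq (s := (Finset.univ : Finset m))
    (f := fun i => Real.sqrt (f i))
  rw [h2, Finset.card_univ] at h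
  calc ∑ i, Real.sqrt (f i)
      = Real.sqrt ((∑ i, Real.sqrt (f i)) ^ 2) :=
        (Real.sqrt_sq (Finset.sum_nonneg fun i _ => Real.sqrt_nonneg _)).symm
    _ ≤ Real.sqrt ((Fintype.card m : ℝ) * ∑ i, f i) := Real.sqrt_le_sqrt h
    _ = Real.sqrt (Fintype.card m) * Real.sqrt (∑ i, f i) :=
        Real.sqrt_mul (by positivity) _

variable {n : ℕ} (T : Matrix (Fin n) (Fin n) ℂ →L[ℂ] Matrix (Fin n) (Fin n) ℂ)

lemma indNorm_bddAbove :
    BddAbove {c : ℝ | ∃ X, traceNorm X ≤ 1 ∧ c = traceNorm (T X)} := by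
  set C : ℝ := ∑ i, ∑ j, ‖T (Matrix.single i j 1)‖ with hCdef
  have hC0 : 0 ≤ C := Finset.sum_nonneg fun i _ => Finset.sum_nonneg fun j _ => norm_nonneg _
  have hentry : ∀ (Y : Matrix (Fin n) (Fin n) ℂ) i j, ‖Y i j‖ ≤ ‖Y‖ := by
    intro Y i j
    have h1 : ‖Y i j‖ ^ 2 ≤ ‖Y‖ ^ 2 := by
      rw [frob_sq]
      calc ‖Y i j‖ ^ 2 ≤ ∑ j', ‖Y i j'‖ ^ 2 :=
            Finset.single_le_sum (f := fun j' => ‖Y i j'‖ ^ 2) (fun _ _ => by positivity)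
              (Finset.mem_univ j)
        _ ≤ ∑ i', ∑ j', ‖Y i' j'‖ ^ 2 :=
            Finset.single_le_sum (f := fun i' => ∑ j', ‖Y i' j'‖ ^ 2)
              (fun _ _ => by positivity) (Finset.mem_univ i)
    exact (pow_le_pow_iff_left₀ (norm_nonneg _) (norm_nonneg _) two_ne_zero).mp h1
  have hTb : ∀ Y : Matrix (Fin n) (Fin n) ℂ, ‖T Y‖ ≤ C * ‖Y‖ := by
    intro Y
    have hY : T Y = ∑ i, ∑ j, Y i j • T (Matrix.single i j 1) := by
      conv_lhs => rw [Matrix.matrix_eq_sum_single Y]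
      simp only [map_sum]
      refine Finset.sum_congr rfl fun i _ => Finset.sum_congr rfl fun j _ => ?_
      rw [← _root_.map_smul, Matrix.smul_single, smul_eq_mul, mul_one]
    rw [hY, hCdef, Finset.sum_mul]
    refine (norm_sum_le _ _).trans (Finset.sum_le_sum fun i _ => ?_)
    rw [Finset.sum_mul]
    refine (norm_sum_le _ _).trans (Finset.sum_le_sum fun j _ => ?_)
    rw [norm_smul, mul_comm]
    exact mul_le_mul_of_nonneg_left (hentry Y i j) (norm_nonneg _)
  refine ⟨Real.sqrt n * C, ?_⟩
  rintro c ⟨X, hX, rfl⟩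
  have hXn : ‖X‖ ≤ 1 := (norm_le_traceNorm X).trans hX
  calc traceNorm (T X) ≤ Real.sqrt (Fintype.card (Fin n)) * ‖T X‖ := traceNorm_le_card_norm _
    _ ≤ Real.sqrt n * (C * ‖X‖) := by
        rw [Fintype.card_fin]
        exact mul_le_mul_of_nonneg_left (hTb X) (Real.sqrt_nonneg _)
    _ ≤ Real.sqrt n * (C * 1) := by
        refine mul_le_mul_of_nonneg_left ?_ (Real.sqrt_nonneg _)
        exact mul_le_mul_of_nonneg_left hXn hC0
    _ = Real.sqrt n * C := by ring

lemma le_indNorm {X : Matrix (Fin n) (Fin n) ℂ} (hX : traceNorm X ≤ 1) :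
    traceNorm (T X) ≤ indNorm T :=
  le_csSup (indNorm_bddAbove T) ⟨X, hX, rfl⟩

lemma indNorm_nonneg : 0 ≤ indNorm T := by
  refine le_csSup (indNorm_bddAbove T) ⟨0, ?_, ?_⟩ <;>
    simp [traceNorm_zero]

lemma traceNorm_apply_le (X : Matrix (Fin n) (Fin n) ℂ) :
    traceNorm (T X) ≤ indNorm T * traceNorm X := by
  rcases eq_or_lt_of_le (traceNorm_nonneg X) with h | h
  · have hX0 : X = 0 := by
      have := (norm_le_traceNorm X).trans h.ge
      exact norm_le_zero_iff.mp this
    simp [hX0, traceNorm_zero]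
  · set a := traceNorm X with ha
    have hnc : ‖((a⁻¹ : ℝ) : ℂ)‖ = a⁻¹ := by
      rw [Complex.norm_real]; exact abs_of_pos (inv_pos.mpr h)
    have h1 : traceNorm (((a⁻¹ : ℝ) : ℂ) • X) = 1 := by
      rw [traceNorm_smul, hnc, ← ha]
      field_simp
    have h2 := le_indNorm T (X := ((a⁻¹ : ℝ) : ℂ) • X) h1.le
    rw [_root_.map_smul, traceNorm_smul, hnc] at h2
    have h3 : a⁻¹ * traceNorm (T X) ≤ indNorm T := h2
    calc traceNorm (T X) = a * (a⁻¹ * traceNorm (T X)) := by field_simp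
      _ ≤ a * indNorm T := mul_le_mul_of_nonneg_left h3 h.le
      _ = indNorm T * a := mul_comm _ _

end Aux3


/-- First-order coefficient: in the adiabatic expansion with ergodic
generator, `b₁(s) = S(s) Ṗ(s) σ(s) = −S(s)² L̇(s) σ(s)`, and hence
`‖b₁(s)‖₁ ≤ ‖S(s)‖²_{1,1} ‖L̇(s)‖_{1,1}`. -/
theorem first_order_coefficient {n : ℕ}
    (L L' P P' S : ℝ → (Matrix (Fin n) (Fin n) ℂ →L[ℂ] Matrix (Fin n) (Fin n) ℂ))
    (σ : ℝ → Matrix (Fin n) (Fin n) ℂ)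
    (hσ : ∀ s, L s (σ s) = 0)
    (hσpsd : ∀ s, (σ s).PosSemidef)
    (htr : ∀ s, Matrix.trace (σ s) = 1)
    (hP : ∀ s X, P s X = Matrix.trace X • σ s)
    (hSQ : ∀ s, (S s) ∘L (1 - P s) = S s ∧ (1 - P s) ∘L (S s) = S s)
    (hSL : ∀ s, (S s) ∘L (L s) = 1 - P s ∧ (L s) ∘L (S s) = 1 - P s)
    (hLd : ∀ s, HasDerivAt L (L' s) s)
    (hPd : ∀ s, HasDerivAt P (P' s) s)
    (hσd : Differentiable ℝ σ) :
    ∀ s, S s (P' s (σ s)) = -(S s (S s (L' s (σ s)))) ∧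
      traceNorm (S s (P' s (σ s))) ≤ indNorm (S s) ^ 2 * indNorm (L' s) := by
  intro s
  set σ' : Matrix (Fin n) (Fin n) ℂ := deriv σ s with hσ'def
  have hσds : HasDerivAt σ σ' s := (hσd s).hasDerivAt
  have hRd : ∀ (F F' : ℝ → (Matrix (Fin n) (Fin n) ℂ →L[ℂ] Matrix (Fin n) (Fin n) ℂ)),
      (∀ t, HasDerivAt F (F' t) t) →
      HasDerivAt (fun t => (F t).restrictScalars ℝ) ((F' s).restrictScalars ℝ) s := by
    intro F F' hF
    exact ((ContinuousLinearMap.restrictScalarsIsometry ℂ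
      (Matrix (Fin n) (Fin n) ℂ) (Matrix (Fin n) (Fin n) ℂ) ℝ
      ℝ).toContinuousLinearMap.hasFDerivAt).comp_hasDerivAt s (hF s)
  -- P' s (σ s) = σ'
  have hPapp : HasDerivAt (fun t => P t (σ s)) (P' s (σ s) + P s 0) s :=
    (hRd P P' hPd).clm_apply (hasDerivAt_const s (σ s))
  have hPfun : (fun t => P t (σ s)) = σ := by
    funext t
    rw [hP t (σ s), htr s, one_smul]
  rw [hPfun, map_zero, add_zero] at hPapp
  have hPσ : P' s (σ s) = σ' := hPapp.unique hσds
  -- L' s (σ s) + L s σ' = 0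
  have hLapp : HasDerivAt (fun t => L t (σ t)) (L' s (σ s) + L s σ') s :=
    (hRd L L' hLd).clm_apply hσds
  have hLfun : (fun t => L t (σ t)) = fun _ => (0 : Matrix (Fin n) (Fin n) ℂ) := by
    funext t; exact hσ t
  rw [hLfun] at hLapp
  have hzero : L' s (σ s) + L s σ' = 0 := hLapp.unique (hasDerivAt_const s 0)
  have hLσ' : L' s (σ s) = -(L s σ') := by linear_combination (norm := abel1) hzero
  -- the algebraic identity
  have hSLσ : S s (L s σ') = σ' - P s σ' := by
    have := congrArg (fun T => T σ') (hSL s).1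
    simpa [ContinuousLinearMap.sub_apply] using this
  have hSS : S s (S s (L' s (σ s))) = -(S s σ') := by
    rw [hLσ', map_neg, map_neg, hSLσ]
    have := congrArg (fun T => T σ') (hSQ s).1
    simp only [ContinuousLinearMap.comp_apply, ContinuousLinearMap.sub_apply,
      ContinuousLinearMap.one_apply] at this
    rw [← this]
  have heq : S s (P' s (σ s)) = -(S s (S s (L' s (σ s)))) := by
    rw [hPσ, hSS, neg_neg]
  refine ⟨heq, ?_⟩
  -- norm bound
  have hσ1 : traceNorm (σ s) = 1 := by
    rw [Aux2.traceNorm_of_psd (hσpsd s), htr s, Complex.one_re]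
  have t0 : traceNorm (L' s (σ s)) ≤ indNorm (L' s) := by
    have := Aux3.traceNorm_apply_le (L' s) (σ s)
    rwa [hσ1, mul_one] at this
  have t1 : traceNorm (S s (L' s (σ s))) ≤ indNorm (S s) * indNorm (L' s) := by
    calc traceNorm (S s (L' s (σ s))) ≤ indNorm (S s) * traceNorm (L' s (σ s)) :=
          Aux3.traceNorm_apply_le (S s) _
      _ ≤ indNorm (S s) * indNorm (L' s) :=
          mul_le_mul_of_nonneg_left t0 (Aux3.indNorm_nonneg (S s))
  calc traceNorm (S s (P' s (σ s)))
      = traceNorm (S s (S s (L' s (σ s)))) := by rw [heq, Aux2.traceNorm_neg]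
    _ ≤ indNorm (S s) * traceNorm (S s (L' s (σ s))) := Aux3.traceNorm_apply_le (S s) _
    _ ≤ indNorm (S s) * (indNorm (S s) * indNorm (L' s)) :=
          mul_le_mul_of_nonneg_left t1 (Aux3.indNorm_nonneg (S s))
    _ = indNorm (S s) ^ 2 * indNorm (L' s) := by ring
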